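/- arXiv:1312.0772 — 7 statements merged into one kernel-verified Lean document; each statement's English description precedes it below -/
import Mathlib

section
/- If S is an LD-set of a graph G, then S is an LD-set of the complement Ḡ if and only if there is no vertex u ∈ V \ S with S ⊆ N_G(u) (i.e., no vertex outside S dominates S in G). -/
variable {V : Type*}

/-- `S` is a dominating set of `G`: every vertex outside `S` has a neighbor in `S`. -/
def IsDominatingSet (G : SimpleGraph V) (S : Set V) : Prop :=
  ∀ v ∉ S, (G.neighborSet v ∩ S).Nonempty

/-- `S` is a locating-dominating set of `G`. -/
def IsLDSet (G : SimpleGraph V) (S : Set V) : Prop :=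
  IsDominatingSet G S ∧
    ∀ u ∉ S, ∀ v ∉ S, G.neighborSet u ∩ S = G.neighborSet v ∩ S → u = v

/-- The location-domination number of `G`. -/
noncomputable def ldNum [Fintype V] (G : SimpleGraph V) : ℕ :=
  sInf {n | ∃ S : Set V, IsLDSet G S ∧ S.ncard = n}

/-- `S` is a global LD-set of `G`: an LD-set of both `G` and its complement. -/
def IsGlobalLDSet (G : SimpleGraph V) (S : Set V) : Prop :=
  IsLDSet G S ∧ IsLDSet Gᶜ S

/-- The global location-domination number of `G`. -/
noncomputable def gldNum [Fintype V] (G : SimpleGraph V) : ℕ :=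
  sInf {n | ∃ S : Set V, IsGlobalLDSet G S ∧ S.ncard = n}

theorem stmt2 [Fintype V] (G : SimpleGraph V) (S : Set V) (hS : IsLDSet G S) :
    IsLDSet Gᶜ S ↔ ¬ ∃ u ∉ S, S ⊆ G.neighborSet u := by
  have key : ∀ x ∉ S, Gᶜ.neighborSet x ∩ S = S \ G.neighborSet x := by
    intro x hx
    ext s
    simp only [Set.mem_inter_iff, SimpleGraph.mem_neighborSet, SimpleGraph.compl_adj,
      Set.mem_diff]
    constructor
    · rintro ⟨⟨_, hna⟩, hs⟩; exact ⟨hs, hna⟩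
    · rintro ⟨hs, hna⟩; exact ⟨⟨fun h => hx (h ▸ hs), hna⟩, hs⟩
  constructor
  · rintro ⟨hdom, _⟩ ⟨u, hu, hsub⟩
    obtain ⟨s, hs⟩ := hdom u hu
    rw [key u hu] at hs
    exact hs.2 (hsub hs.1)
  · intro hno
    constructor
    · intro v hv
      rw [key v hv, Set.diff_nonempty]
      intro hsub
      exact hno ⟨v, hv, hsub⟩
    · intro u hu v hv h
      rw [key u hu, key v hv] at h
      apply hS.2 u hu v hv
      ext s
      have := Set.ext_iff.mp h s
      simp only [Set.mem_diff, Set.mem_inter_iff, SimpleGraph.mem_neighborSet] at this ⊢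
      tauto
end

section
/- If S is an LD-set of a graph G and u ∈ V \ S is a vertex with S ⊆ N_G(u), then S ∪ {u} is an LD-set of the complement Ḡ. -/
variable {V : Type*}

theorem stmt4 [Fintype V] (G : SimpleGraph V) (S : Set V) (hS : IsLDSet G S)
    (u : V) (hu : u ∉ S) (hdom : S ⊆ G.neighborSet u) :
    IsLDSet Gᶜ (S ∪ {u}) := by
  obtain ⟨hSdom, hSloc⟩ := hS
  constructor
  · intro v hv
    have hvS : v ∉ S := fun h => hv (Or.inl h)
    have hvu : v ≠ u := fun h => hv (Or.inr h)
    by_cases hall : ∀ s ∈ S, G.Adj v s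
    · exact absurd (hSloc v hvS u hu (by
        ext s
        simp only [Set.mem_inter_iff, SimpleGraph.mem_neighborSet]
        exact ⟨fun ⟨_, hs⟩ => ⟨hdom hs, hs⟩, fun ⟨_, hs⟩ => ⟨hall s hs, hs⟩⟩)) hvu
    · push_neg at hall
      obtain ⟨s, hsS, hns⟩ := hall
      exact ⟨s, ⟨⟨fun h => hvS (h ▸ hsS), hns⟩, Or.inl hsS⟩⟩
  · intro v hv w hw h
    have hvS : v ∉ S := fun h => hv (Or.inl h)
    have hwS : w ∉ S := fun h => hw (Or.inl h)
    apply hSloc v hvS w hwS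
    ext s
    by_cases hsS : s ∈ S
    · have hveq : s ∈ Gᶜ.neighborSet v ∩ (S ∪ {u}) ↔ s ∈ Gᶜ.neighborSet w ∩ (S ∪ {u}) := by rw [h]
      simp only [Set.mem_inter_iff, SimpleGraph.mem_neighborSet, SimpleGraph.compl_adj,
        Set.mem_union, Set.mem_singleton_iff] at hveq
      have hvs : v ≠ s := fun he => hvS (he ▸ hsS)
      have hws : w ≠ s := fun he => hwS (he ▸ hsS)
      simp only [Set.mem_inter_iff, SimpleGraph.mem_neighborSet]
      constructor
      · intro ⟨ha, _⟩
        refine ⟨?_, hsS⟩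
        by_contra hna
        exact ((hveq.mpr ⟨⟨hws, hna⟩, Or.inl hsS⟩).1.2) ha
      · intro ⟨ha, _⟩
        refine ⟨?_, hsS⟩
        by_contra hna
        exact ((hveq.mp ⟨⟨hvs, hna⟩, Or.inl hsS⟩).1.2) ha
    · simp [hsS]
end

section
/- For every finite simple graph G, |λ(G) − λ(Ḡ)| ≤ 1, where λ denotes the location-domination number. -/
variable {V : Type*}

lemma compl_nbhd_inter {G : SimpleGraph V} {S : Set V} {u : V} (hu : u ∉ S) :
    Gᶜ.neighborSet u ∩ S = S \ (G.neighborSet u ∩ S) := by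
  ext s
  simp only [SimpleGraph.mem_neighborSet, SimpleGraph.compl_adj, Set.mem_inter_iff,
    Set.mem_diff]
  constructor
  · rintro ⟨⟨hne, hadj⟩, hs⟩; exact ⟨hs, fun h => hadj h.1⟩
  · rintro ⟨hs, h⟩
    exact ⟨⟨fun he => hu (he ▸ hs), fun ha => h ⟨ha, hs⟩⟩, hs⟩

lemma loc_compl {G : SimpleGraph V} {S : Set V} (hS : IsLDSet G S) :
    ∀ u ∉ S, ∀ v ∉ S, Gᶜ.neighborSet u ∩ S = Gᶜ.neighborSet v ∩ S → u = v := by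
  intro u hu v hv h
  rw [compl_nbhd_inter hu, compl_nbhd_inter hv] at h
  apply hS.2 u hu v hv
  have h1 : G.neighborSet u ∩ S ⊆ S := Set.inter_subset_right
  have h2 : G.neighborSet v ∩ S ⊆ S := Set.inter_subset_right
  rw [← Set.diff_diff_cancel_left h1, ← Set.diff_diff_cancel_left h2, h]

lemma univ_isLD (G : SimpleGraph V) : IsLDSet G Set.univ := by
  constructor
  · intro v hv; exact absurd (Set.mem_univ v) hv
  · intro u hu; exact absurd (Set.mem_univ u) hu

lemma exists_ld_min [Fintype V] (G : SimpleGraph V) :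
    ∃ S : Set V, IsLDSet G S ∧ S.ncard = ldNum G := by
  have h : {n | ∃ S : Set V, IsLDSet G S ∧ S.ncard = n}.Nonempty :=
    ⟨(Set.univ : Set V).ncard, Set.univ, univ_isLD G, rfl⟩
  exact Nat.sInf_mem h

lemma ldNum_compl_le [Fintype V] (G : SimpleGraph V) :
    ldNum Gᶜ ≤ ldNum G + 1 := by
  obtain ⟨S, hS, hcard⟩ := exists_ld_min G
  by_cases hbad : ∃ w, w ∉ S ∧ Gᶜ.neighborSet w ∩ S = ∅
  · obtain ⟨w, hw, hwbad⟩ := hbad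
    have hLD : IsLDSet Gᶜ (insert w S) := by
      constructor
      · intro v hv
        have hvS : v ∉ S := fun h => hv (Set.mem_insert_of_mem w h)
        have hvw : v ≠ w := fun h => hv (h ▸ Set.mem_insert w S)
        have hne : Gᶜ.neighborSet v ∩ S ≠ ∅ := by
          intro h
          exact hvw (loc_compl hS v hvS w hw (h.trans hwbad.symm))
        obtain ⟨s, hs⟩ := Set.nonempty_iff_ne_empty.2 hne
        exact ⟨s, hs.1, Set.mem_insert_of_mem w hs.2⟩
      · intro u hu v hv h
        have huS : u ∉ S := fun h => hu (Set.mem_insert_of_mem w h)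
        have hvS : v ∉ S := fun h => hv (Set.mem_insert_of_mem w h)
        apply loc_compl hS u huS v hvS
        rw [compl_nbhd_inter huS, compl_nbhd_inter hvS]
        ext s
        constructor
        · intro hs
          have : s ∈ Gᶜ.neighborSet u ∩ insert w S := by
            rw [compl_nbhd_inter hu]
            exact ⟨Set.mem_insert_of_mem w hs.1, fun hc =>
              hs.2 ⟨hc.1, hs.1⟩⟩
          rw [h, compl_nbhd_inter hv] at this
          exact ⟨hs.1, fun hc => this.2 ⟨hc.1, Set.mem_insert_of_mem w hc.2⟩⟩
        · intro hs
          have : s ∈ Gᶜ.neighborSet v ∩ insert w S := by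
            rw [compl_nbhd_inter hv]
            exact ⟨Set.mem_insert_of_mem w hs.1, fun hc =>
              hs.2 ⟨hc.1, hs.1⟩⟩
          rw [← h, compl_nbhd_inter hu] at this
          exact ⟨hs.1, fun hc => this.2 ⟨hc.1, Set.mem_insert_of_mem w hc.2⟩⟩
    have : ldNum Gᶜ ≤ (insert w S).ncard :=
      Nat.sInf_le ⟨insert w S, hLD, rfl⟩
    rwa [Set.ncard_insert_of_notMem hw (Set.toFinite S), hcard] at this
  · push_neg at hbad
    have hLD : IsLDSet Gᶜ S := by
      refine ⟨fun v hv => hbad v hv, loc_compl hS⟩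
    have : ldNum Gᶜ ≤ S.ncard := Nat.sInf_le ⟨S, hLD, rfl⟩
    omega

theorem stmt5 [Fintype V] (G : SimpleGraph V) :
    |(ldNum G : ℤ) - (ldNum Gᶜ : ℤ)| ≤ 1 := by
  have h1 := ldNum_compl_le G
  have h2 := ldNum_compl_le Gᶜ
  rw [compl_compl] at h2
  rw [abs_le]
  constructor <;> [skip; skip] <;> omega
end

section
/- For any graph G, max{λ(G), λ(Ḡ)} ≤ λ_g(G) ≤ min{λ(G), λ(Ḡ)} + 1. In particular, if λ(G) ≠ λ(Ḡ), then λ_g(G) = max{λ(G), λ(Ḡ)}. -/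
variable {V : Type*}

lemma compl_sep (G : SimpleGraph V) {S : Set V} {u w : V} (hu : u ∉ S) (hw : w ∉ S)
    (h : Gᶜ.neighborSet u ∩ S = Gᶜ.neighborSet w ∩ S) :
    G.neighborSet u ∩ S = G.neighborSet w ∩ S := by
  ext s
  simp only [Set.mem_inter_iff, SimpleGraph.mem_neighborSet]
  constructor
  · rintro ⟨ha, hs⟩
    refine ⟨?_, hs⟩
    by_contra hna
    have hws : w ≠ s := fun e => hw (e ▸ hs)
    have : s ∈ Gᶜ.neighborSet w ∩ S := ⟨(SimpleGraph.compl_adj _ _ _).mpr ⟨hws, hna⟩, hs⟩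
    rw [← h] at this
    exact ((SimpleGraph.compl_adj _ _ _).mp this.1).2 ha
  · rintro ⟨ha, hs⟩
    refine ⟨?_, hs⟩
    by_contra hna
    have hus : u ≠ s := fun e => hu (e ▸ hs)
    have : s ∈ Gᶜ.neighborSet u ∩ S := ⟨(SimpleGraph.compl_adj _ _ _).mpr ⟨hus, hna⟩, hs⟩
    rw [h] at this
    exact ((SimpleGraph.compl_adj _ _ _).mp this.1).2 ha

lemma key [Fintype V] (G : SimpleGraph V) {S : Set V} (hS : IsLDSet G S) :
    ∃ T : Set V, IsGlobalLDSet G T ∧ T.ncard ≤ S.ncard + 1 := by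
  classical
  by_cases hc : ∃ v, v ∉ S ∧ G.neighborSet v ∩ S = S
  · obtain ⟨v, hv, hvfull⟩ := hc
    have hins : ∀ X : Set V, (X ∩ insert v S) ∩ S = X ∩ S := by
      intro X
      rw [Set.inter_assoc, Set.inter_eq_right.mpr (Set.subset_insert v S)]
    refine ⟨insert v S, ⟨⟨?_, ?_⟩, ⟨?_, ?_⟩⟩, ?_⟩
    · intro u hu
      have huS : u ∉ S := fun h => hu (Set.mem_insert_of_mem _ h)
      obtain ⟨s, hs1, hs2⟩ := hS.1 u huS
      exact ⟨s, hs1, Set.mem_insert_of_mem _ hs2⟩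
    · intro u hu w hw h
      have huS : u ∉ S := fun h => hu (Set.mem_insert_of_mem _ h)
      have hwS : w ∉ S := fun h => hw (Set.mem_insert_of_mem _ h)
      apply hS.2 u huS w hwS
      have := congrArg (· ∩ S) h
      simpa only [hins] using this
    · -- dominating in complement
      intro u hu
      have huS : u ∉ S := fun h => hu (Set.mem_insert_of_mem _ h)
      have huv : u ≠ v := fun e => hu (e ▸ Set.mem_insert v S)
      have hnsub : ¬ S ⊆ G.neighborSet u := by
        intro hsub
        exact huv (hS.2 u huS v hv ((Set.inter_eq_right.mpr hsub).trans hvfull.symm))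
      obtain ⟨s, hsS, hsn⟩ := Set.not_subset.mp hnsub
      have hus : u ≠ s := fun e => huS (e ▸ hsS)
      exact ⟨s, (SimpleGraph.compl_adj _ _ _).mpr ⟨hus, hsn⟩, Set.mem_insert_of_mem _ hsS⟩
    · intro u hu w hw h
      have huS : u ∉ S := fun h => hu (Set.mem_insert_of_mem _ h)
      have hwS : w ∉ S := fun h => hw (Set.mem_insert_of_mem _ h)
      apply hS.2 u huS w hwS
      apply compl_sep G huS hwS
      have := congrArg (· ∩ S) h
      simpa only [hins] using this
    · rw [Set.ncard_insert_of_notMem hv (Set.toFinite S)]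
  · push_neg at hc
    refine ⟨S, ⟨hS, ?_, ?_⟩, Nat.le_succ _⟩
    · intro u hu
      have hnsub : ¬ S ⊆ G.neighborSet u := fun hsub =>
        hc u hu (Set.inter_eq_right.mpr hsub)
      obtain ⟨s, hsS, hsn⟩ := Set.not_subset.mp hnsub
      have hus : u ≠ s := fun e => hu (e ▸ hsS)
      exact ⟨s, (SimpleGraph.compl_adj _ _ _).mpr ⟨hus, hsn⟩, hsS⟩
    · intro u hu w hw h
      exact hS.2 u hu w hw (compl_sep G hu hw h)

lemma global_compl (G : SimpleGraph V) {S : Set V} :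
    IsGlobalLDSet G S ↔ IsGlobalLDSet Gᶜ S := by
  unfold IsGlobalLDSet
  rw [compl_compl]
  exact and_comm

lemma gld_le_ld_succ [Fintype V] (G : SimpleGraph V) : gldNum G ≤ ldNum G + 1 := by
  obtain ⟨S, hS, hcard⟩ := Nat.sInf_mem (⟨_, Set.univ, univ_isLD G, rfl⟩ :
    {n | ∃ S : Set V, IsLDSet G S ∧ S.ncard = n}.Nonempty)
  obtain ⟨T, hT, hle⟩ := key G hS
  calc gldNum G ≤ T.ncard := Nat.sInf_le ⟨T, hT, rfl⟩
    _ ≤ S.ncard + 1 := hle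
    _ = ldNum G + 1 := by rw [hcard]; rfl

theorem stmt12 [Fintype V] (G : SimpleGraph V) :
    (max (ldNum G) (ldNum Gᶜ) ≤ gldNum G ∧
      gldNum G ≤ min (ldNum G) (ldNum Gᶜ) + 1) ∧
    (ldNum G ≠ ldNum Gᶜ → gldNum G = max (ldNum G) (ldNum Gᶜ)) := by
  obtain ⟨S, hS, hcard⟩ := Nat.sInf_mem (⟨_, Set.univ, ⟨univ_isLD G, univ_isLD Gᶜ⟩, rfl⟩ :
    {n | ∃ S : Set V, IsGlobalLDSet G S ∧ S.ncard = n}.Nonempty)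
  have h1 : ldNum G ≤ gldNum G := Nat.sInf_le ⟨S, hS.1, hcard⟩
  have h2 : ldNum Gᶜ ≤ gldNum G := Nat.sInf_le ⟨S, hS.2, hcard⟩
  have h3 : gldNum G ≤ ldNum G + 1 := gld_le_ld_succ G
  have h4 : gldNum G ≤ ldNum Gᶜ + 1 := by
    have := gld_le_ld_succ Gᶜ
    have heq : gldNum Gᶜ = gldNum G := by
      unfold gldNum
      congr 1
      ext n
      exact ⟨fun ⟨S, h, hc⟩ => ⟨S, (global_compl G).mpr h, hc⟩,
             fun ⟨S, h, hc⟩ => ⟨S, (global_compl G).mp h, hc⟩⟩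
    omega
  exact ⟨⟨max_le h1 h2, by omega⟩, fun hne => by omega⟩
end

section
/- For the complete bipartite graph K_{r,s} with 2 ≤ r ≤ s, λ(K_{r,s}) = r + s − 2 and λ(complement of K_{r,s}) = r + s − 2. -/
variable {V : Type*}

private lemma aux_compl_ncard_le_two {r s : ℕ} (S : Set (Fin r ⊕ Fin s))
    (h : ∀ u ∉ S, ∀ v ∉ S, Sum.isLeft u = Sum.isLeft v → u = v) : Sᶜ.ncard ≤ 2 := by
  have := Set.ncard_le_ncard_of_injOn (s := Sᶜ) Sum.isLeft
    (fun a _ => Set.mem_univ (Sum.isLeft a))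
    (fun u hu v hv huv => h u hu v hv huv) (Set.finite_univ)
  simpa [Set.ncard_univ] using this

private lemma aux_lower {r s : ℕ} (S : Set (Fin r ⊕ Fin s)) (h2 : Sᶜ.ncard ≤ 2) :
    r + s - 2 ≤ S.ncard := by
  have hc : S.ncard + Sᶜ.ncard = r + s := by
    rw [Set.ncard_add_ncard_compl, Nat.card_sum]
    simp
  omega

private lemma aux_card {α : Type*} [Fintype α] (a b : α) (h : a ≠ b) :
    ({a, b}ᶜ : Set α).ncard = Fintype.card α - 2 := by
  have hc := Set.ncard_add_ncard_compl ({a, b}ᶜ : Set α)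
  rw [compl_compl, Set.ncard_pair h, Nat.card_eq_fintype_card] at hc
  omega

private lemma aux_mem_pair {α : Type*} {a b v : α} (hv : v ∉ ({a, b}ᶜ : Set α)) :
    v = a ∨ v = b := by
  have := hv
  simp only [Set.mem_compl_iff, not_not, Set.mem_insert_iff, Set.mem_singleton_iff] at this
  exact this

private lemma aux_ld {α : Type*} (G : SimpleGraph α) (a0 b0 a1 b1 : α)
    (ha1 : a1 ≠ a0) (ha1' : a1 ≠ b0) (hb1 : b1 ≠ a0) (hb1' : b1 ≠ b0)
    (hadj1 : G.Adj a0 b1) (hadj2 : G.Adj b0 a1) (hn : ¬ G.Adj b0 b1) :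
    IsLDSet G ({a0, b0}ᶜ : Set α) := by
  have ha1S : a1 ∈ ({a0, b0}ᶜ : Set α) := by simp [ha1, ha1']
  have hb1S : b1 ∈ ({a0, b0}ᶜ : Set α) := by simp [hb1, hb1']
  constructor
  · intro v hv
    rcases aux_mem_pair hv with rfl | rfl
    · exact ⟨b1, hadj1, hb1S⟩
    · exact ⟨a1, hadj2, ha1S⟩
  · intro u hu v hv hN
    rcases aux_mem_pair hu with rfl | rfl <;> rcases aux_mem_pair hv with rfl | rfl <;> try rfl
    · exfalso
      have h1 := Set.mem_inter ((G.mem_neighborSet _ _).mpr hadj1) hb1S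
      rw [hN] at h1
      exact hn ((G.mem_neighborSet _ _).mp h1.1)
    · exfalso
      have h1 := Set.mem_inter ((G.mem_neighborSet _ _).mpr hadj1) hb1S
      rw [← hN] at h1
      exact hn ((G.mem_neighborSet _ _).mp h1.1)

theorem stmt17 (r s : ℕ) (hr : 2 ≤ r) (hrs : r ≤ s) :
    ldNum (completeBipartiteGraph (Fin r) (Fin s)) = r + s - 2 ∧
    ldNum (completeBipartiteGraph (Fin r) (Fin s))ᶜ = r + s - 2 := by
  have hs2 : 2 ≤ s := hr.trans hrs
  have hneab : (Sum.inl ⟨0, by omega⟩ : Fin r ⊕ Fin s) ≠ Sum.inr ⟨0, by omega⟩ := by simp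
  have hcard : ((({Sum.inl ⟨0, by omega⟩, Sum.inr ⟨0, by omega⟩} : Set (Fin r ⊕ Fin s)))ᶜ).ncard
      = r + s - 2 := by
    rw [aux_card _ _ hneab]
    simp
  have hLD : IsLDSet (completeBipartiteGraph (Fin r) (Fin s)) ({Sum.inl ⟨0, by omega⟩, Sum.inr ⟨0, by omega⟩}ᶜ : Set (Fin r ⊕ Fin s)) := by
    refine aux_ld (completeBipartiteGraph (Fin r) (Fin s)) _ _ (Sum.inl ⟨1, by omega⟩) (Sum.inr ⟨1, by omega⟩) ?_ ?_ ?_ ?_ ?_ ?_ ?_ <;>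
      simp [Fin.ext_iff]
  have hLDc : IsLDSet (completeBipartiteGraph (Fin r) (Fin s))ᶜ
      ({Sum.inl ⟨0, by omega⟩, Sum.inr ⟨0, by omega⟩}ᶜ : Set (Fin r ⊕ Fin s)) := by
    refine aux_ld (completeBipartiteGraph (Fin r) (Fin s))ᶜ _ _ (Sum.inr ⟨1, by omega⟩) (Sum.inl ⟨1, by omega⟩) ?_ ?_ ?_ ?_ ?_ ?_ ?_ <;>
      simp [Fin.ext_iff]
  -- lower bound for completeBipartiteGraph (Fin r) (Fin s)
  have hlow : ∀ S : Set (Fin r ⊕ Fin s), IsLDSet (completeBipartiteGraph (Fin r) (Fin s)) S → r + s - 2 ≤ S.ncard := by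
    intro S hS
    refine aux_lower S (aux_compl_ncard_le_two S ?_)
    intro u hu v hv huv
    refine hS.2 u hu v hv ?_
    have hNN : (completeBipartiteGraph (Fin r) (Fin s)).neighborSet u = (completeBipartiteGraph (Fin r) (Fin s)).neighborSet v := by
      ext w
      cases u <;> cases v <;> simp_all [SimpleGraph.neighborSet]
    rw [hNN]
  -- lower bound for (completeBipartiteGraph (Fin r) (Fin s))ᶜ
  have hlowc : ∀ S : Set (Fin r ⊕ Fin s), IsLDSet (completeBipartiteGraph (Fin r) (Fin s))ᶜ S → r + s - 2 ≤ S.ncard := by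
    intro S hS
    refine aux_lower S (aux_compl_ncard_le_two S ?_)
    intro u hu v hv huv
    refine hS.2 u hu v hv ?_
    have key : ∀ x : Fin r ⊕ Fin s, x ∉ S →
        (completeBipartiteGraph (Fin r) (Fin s))ᶜ.neighborSet x ∩ S = {w | Sum.isLeft w = Sum.isLeft x} ∩ S := by
      intro x hx
      ext w
      simp only [Set.mem_inter_iff, SimpleGraph.mem_neighborSet, SimpleGraph.compl_adj,
        Set.mem_setOf_eq, and_congr_left_iff]
      intro hwS
      constructor
      · rintro ⟨hne', hnadj⟩
        cases x <;> cases w <;> simp_all [completeBipartiteGraph]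
      · intro hiso
        refine ⟨fun h => hx (h ▸ hwS), ?_⟩
        cases x <;> cases w <;> simp_all [completeBipartiteGraph]
    rw [key u hu, key v hv, huv]
  constructor
  · refine le_antisymm (Nat.sInf_le ⟨_, hLD, hcard⟩) (le_csInf ⟨_, _, hLD, hcard⟩ ?_)
    rintro n ⟨S, hS, rfl⟩
    exact hlow S hS
  · refine le_antisymm (Nat.sInf_le ⟨_, hLDc, hcard⟩) (le_csInf ⟨_, _, hLDc, hcard⟩ ?_)
    rintro n ⟨S, hS, rfl⟩
    exact hlowc S hS
end

section
/- Let G be a graph whose blocks are all cycles or complete graphs (a block-cactus), let S be an LD-set of G, and let u ∈ V \ S be a vertex with S ⊆ N(u). Then the subgraph of G induced by N(u) is a disjoint union of cliques. -/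
variable {V : Type*}

/-- The induced subgraph on `B` is connected and has no cut vertex:
removing any vertex keeps it (pre)connected. -/
def NoCutVertexOn (G : SimpleGraph V) (B : Set V) : Prop :=
  ∀ v : V, (G.induce (B \ {v})).Preconnected

/-- `B` is a block of `G`: a maximal vertex set inducing a connected
subgraph with no cut vertex. -/
def IsBlock (G : SimpleGraph V) (B : Set V) : Prop :=
  (G.induce B).Connected ∧ NoCutVertexOn G B ∧
    ∀ C : Set V, B ⊆ C → (G.induce C).Connected → NoCutVertexOn G C → B = C

/-- The induced subgraph on `B` is complete. -/
def IsCompleteOn (G : SimpleGraph V) (B : Set V) : Prop :=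
  ∀ x ∈ B, ∀ y ∈ B, x ≠ y → G.Adj x y

/-- The induced subgraph on `B` is a cycle: connected and 2-regular. -/
def IsCycleOn (G : SimpleGraph V) (B : Set V) : Prop :=
  (G.induce B).Connected ∧ ∀ v : B, ((G.induce B).neighborSet v).ncard = 2

/-- `G` is a block-cactus: connected, and every block is a cycle or complete. -/
def IsBlockCactus (G : SimpleGraph V) : Prop :=
  G.Connected ∧ ∀ B : Set V, IsBlock G B → IsCycleOn G B ∨ IsCompleteOn G B

/-- If some vertex `h ∈ T` is adjacent to every other vertex of `T`, then
the induced subgraph on `T` is preconnected. -/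
lemma hub_preconnected (G : SimpleGraph V) (T : Set V) (h : V) (hh : h ∈ T)
    (hadj : ∀ w ∈ T, w ≠ h → G.Adj h w) : (G.induce T).Preconnected := by
  have key : ∀ c : T, (G.induce T).Reachable ⟨h, hh⟩ c := by
    rintro ⟨c, hc⟩
    by_cases hch : c = h
    · subst hch; rfl
    · exact SimpleGraph.Adj.reachable (by simpa using hadj c hc hch)
  intro a b
  exact (key a).symm.trans (key b)

/-- In a block-cactus, if `u ∉ S` dominates the LD-set `S`, then the subgraph
induced on `N(u)` is a disjoint union of cliques (equivalently, adjacency is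
transitive on `N(u)`). -/
theorem stmt18 [Fintype V] (G : SimpleGraph V) (hG : IsBlockCactus G)
    (S : Set V) (hS : IsLDSet G S) (u : V) (hu : u ∉ S)
    (hdom : S ⊆ G.neighborSet u) :
    ∀ x ∈ G.neighborSet u, ∀ y ∈ G.neighborSet u, ∀ z ∈ G.neighborSet u,
      G.Adj x y → G.Adj y z → x ≠ z → G.Adj x z := by
  intro x hx y hy z hz hxy hyz hxz
  have hux : G.Adj u x := hx
  have huy : G.Adj u y := hy
  have huz : G.Adj u z := hz
  set B₀ : Set V := {u, x, y, z} with hB₀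
  have huB₀ : u ∈ B₀ := by simp [hB₀]
  have hadjB₀ : ∀ w ∈ B₀, w ≠ u → G.Adj u w := by
    intro w hw hwu
    simp only [hB₀, Set.mem_insert_iff, Set.mem_singleton_iff] at hw
    rcases hw with rfl | rfl | rfl | rfl
    · exact absurd rfl hwu
    · exact hux
    · exact huy
    · exact huz
  have hconn : (G.induce B₀).Connected :=
    (SimpleGraph.connected_iff _).mpr ⟨hub_preconnected G B₀ u huB₀ hadjB₀, ⟨⟨u, huB₀⟩⟩⟩
  have hncv : NoCutVertexOn G B₀ := by
    intro v
    by_cases hvu : v = u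
    · subst hvu
      refine hub_preconnected G _ y ⟨by simp [hB₀], by simpa using huy.ne'⟩ ?_
      rintro w ⟨hwB, hwu⟩ hwy
      simp only [Set.mem_singleton_iff] at hwu
      simp only [hB₀, Set.mem_insert_iff, Set.mem_singleton_iff] at hwB
      rcases hwB with rfl | rfl | rfl | rfl
      · exact absurd rfl hwu
      · exact hxy.symm
      · exact absurd rfl hwy
      · exact hyz
    · refine hub_preconnected G _ u ⟨huB₀, by simpa using Ne.symm hvu⟩ ?_
      rintro w ⟨hwB, _⟩ hwu
      exact hadjB₀ w hwB hwu
  set P : Set (Set V) := {B | B₀ ⊆ B ∧ (G.induce B).Connected ∧ NoCutVertexOn G B}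
    with hP
  have hmem : B₀ ∈ P := ⟨Set.Subset.rfl, hconn, hncv⟩
  obtain ⟨B, hBP, hBmax⟩ :=
    Set.Finite.exists_maximalFor Set.ncard P (Set.toFinite P) ⟨B₀, hmem⟩
  have hBblock : IsBlock G B := by
    refine ⟨hBP.2.1, hBP.2.2, ?_⟩
    intro C hBC hCconn hCncv
    have hCP : C ∈ P := ⟨hBP.1.trans hBC, hCconn, hCncv⟩
    have hcard := hBmax hCP (Set.ncard_le_ncard hBC C.toFinite)
    exact Set.eq_of_subset_of_ncard_le hBC hcard.ge C.toFinite
  have huB : u ∈ B := hBP.1 huB₀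
  have hxB : x ∈ B := hBP.1 (by simp [hB₀])
  have hyB : y ∈ B := hBP.1 (by simp [hB₀])
  have hzB : z ∈ B := hBP.1 (by simp [hB₀])
  rcases hG.2 B hBblock with hcyc | hcomp
  · exfalso
    have h2 := hcyc.2 ⟨u, huB⟩
    have hsub : ({⟨x, hxB⟩, ⟨y, hyB⟩, ⟨z, hzB⟩} : Set B) ⊆
        (G.induce B).neighborSet ⟨u, huB⟩ := by
      intro w hw
      simp only [Set.mem_insert_iff, Set.mem_singleton_iff] at hw
      rcases hw with rfl | rfl | rfl
      · exact (by simpa using hux : (G.induce B).Adj ⟨u, huB⟩ ⟨x, hxB⟩)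
      · exact (by simpa using huy : (G.induce B).Adj ⟨u, huB⟩ ⟨y, hyB⟩)
      · exact (by simpa using huz : (G.induce B).Adj ⟨u, huB⟩ ⟨z, hzB⟩)
    have h3 : ({⟨x, hxB⟩, ⟨y, hyB⟩, ⟨z, hzB⟩} : Set B).ncard = 3 := by
      rw [Set.ncard_insert_of_notMem (by simp [Subtype.ext_iff, hxy.ne, hxz])
        (Set.toFinite _),
        Set.ncard_pair (by simp [Subtype.ext_iff, hyz.ne])]
    have hle := Set.ncard_le_ncard hsub (Set.toFinite _)
    rw [h3, h2] at hle
    omega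
  · exact hcomp x hxB z hzB hxz
end

section
/- Let G be a block-cactus, S an LD-set of G, u ∈ V \ S a vertex with S ⊆ N(u), and let W = V \ N[u]. Then for every w ∈ W, 1 ≤ |N(u) ∩ N(w)| ≤ 2; moreover if N(u) ∩ N(w) = {x} is a single vertex, then x ∈ S, and if N(u) ∩ N(w) = {x,y} has two vertices, then x and y are not adjacent. -/
variable {V : Type*}

section Aux

variable {G : SimpleGraph V}

lemma reach_induce {B : Set V} {a b : V} (ha : a ∈ B) (hb : b ∈ B) (h : G.Adj a b) :
    (G.induce B).Reachable ⟨a, ha⟩ ⟨b, hb⟩ :=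
  SimpleGraph.Adj.reachable (by simpa using h)

lemma star_preconnected {B : Set V} {h t₀ : V} (hh : h ∈ B) (ht : t₀ ∈ B) (hadj : G.Adj h t₀)
    (hstar : ∀ a ∈ B, a = h ∨ G.Adj h a ∨ G.Adj a t₀) : (G.induce B).Preconnected := by
  have key : ∀ a (ha : a ∈ B), (G.induce B).Reachable ⟨a, ha⟩ ⟨t₀, ht⟩ := by
    intro a ha
    rcases hstar a ha with rfl | h1 | h1
    · exact reach_induce ha ht hadj
    · exact (reach_induce hh ha h1).symm.trans (reach_induce hh ht hadj)
    · exact reach_induce ha ht h1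
  intro x y
  exact (key x.1 x.2).trans (key y.1 y.2).symm

lemma hub_lemma {u w : V} {T : Set V} (huw : u ≠ w)
    (hadj : ∀ t ∈ T, G.Adj u t ∧ G.Adj w t)
    {t₁ t₂ : V} (ht₁ : t₁ ∈ T) (ht₂ : t₂ ∈ T) (h12 : t₁ ≠ t₂) :
    (G.induce (insert u (insert w T))).Connected ∧
      NoCutVertexOn G (insert u (insert w T)) := by
  set B := insert u (insert w T) with hB
  have huB : u ∈ B := Set.mem_insert _ _
  have hwB : w ∈ B := Set.mem_insert_of_mem _ (Set.mem_insert _ _)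
  have hTB : ∀ t ∈ T, t ∈ B := fun t ht => Set.mem_insert_of_mem _ (Set.mem_insert_of_mem _ ht)
  constructor
  · have hpre : (G.induce B).Preconnected := by
      refine star_preconnected huB (hTB t₁ ht₁) (hadj t₁ ht₁).1 ?_
      intro a ha
      rcases ha with rfl | rfl | ha
      · exact Or.inl rfl
      · exact Or.inr (Or.inr (hadj t₁ ht₁).2)
      · exact Or.inr (Or.inl (hadj a ha).1)
    exact (SimpleGraph.connected_iff _).mpr ⟨hpre, ⟨⟨u, huB⟩⟩⟩
  · intro v
    -- choose a target t₀ ∈ T with t₀ ≠ v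
    obtain ⟨t₀, ht₀T, ht₀v⟩ : ∃ t₀ ∈ T, t₀ ≠ v := by
      by_cases h : t₁ = v
      · exact ⟨t₂, ht₂, fun hc => h12 (h.trans hc.symm)⟩
      · exact ⟨t₁, ht₁, h⟩
    -- choose a hub h₀ ∈ {u, w} with h₀ ≠ v
    obtain ⟨h₀, hh₀, hh₀v⟩ : ∃ h₀, (h₀ = u ∨ h₀ = w) ∧ h₀ ≠ v := by
      by_cases h : u = v
      · exact ⟨w, Or.inr rfl, fun hc => huw (h.trans hc.symm)⟩
      · exact ⟨u, Or.inl rfl, h⟩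
    have hh₀B : h₀ ∈ B \ {v} := by
      rcases hh₀ with rfl | rfl
      · exact ⟨huB, hh₀v⟩
      · exact ⟨hwB, hh₀v⟩
    have ht₀B : t₀ ∈ B \ {v} := ⟨hTB t₀ ht₀T, ht₀v⟩
    have hadj₀ : G.Adj h₀ t₀ := by
      rcases hh₀ with rfl | rfl
      · exact (hadj t₀ ht₀T).1
      · exact (hadj t₀ ht₀T).2
    refine star_preconnected hh₀B ht₀B hadj₀ ?_
    rintro a ⟨ha, -⟩
    rcases ha with rfl | rfl | ha
    · rcases hh₀ with rfl | rfl
      · exact Or.inl rfl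
      · exact Or.inr (Or.inr (hadj t₀ ht₀T).1)
    · rcases hh₀ with rfl | rfl
      · exact Or.inr (Or.inr (hadj t₀ ht₀T).2)
      · exact Or.inl rfl
    · rcases hh₀ with rfl | rfl
      · exact Or.inr (Or.inl (hadj a ha).1)
      · exact Or.inr (Or.inl (hadj a ha).2)

lemma exists_block_superset [Fintype V] {B₀ : Set V}
    (hc : (G.induce B₀).Connected) (hn : NoCutVertexOn G B₀) :
    ∃ C, B₀ ⊆ C ∧ IsBlock G C := by
  set F : Set (Set V) := {C | B₀ ⊆ C ∧ (G.induce C).Connected ∧ NoCutVertexOn G C} with hF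
  have hfin : F.Finite := Set.toFinite F
  have hne : F.Nonempty := ⟨B₀, subset_refl _, hc, hn⟩
  obtain ⟨C, hC, hmax⟩ := Set.Finite.exists_maximalFor id F hfin hne
  refine ⟨C, hC.1, hC.2.1, hC.2.2, ?_⟩
  intro C' hsub hconn hncv
  exact le_antisymm hsub (hmax ⟨hC.1.trans hsub, hconn, hncv⟩ hsub)

lemma cycle_no_three [Fintype V] {C : Set V} (hcyc : IsCycleOn G C) {c p q r : V}
    (hc : c ∈ C) (hp : p ∈ C) (hq : q ∈ C) (hr : r ∈ C)
    (hpq : p ≠ q) (hpr : p ≠ r) (hqr : q ≠ r)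
    (h1 : G.Adj c p) (h2 : G.Adj c q) (h3 : G.Adj c r) : False := by
  have hsub : ({⟨p, hp⟩, ⟨q, hq⟩, ⟨r, hr⟩} : Set C) ⊆
      (G.induce C).neighborSet ⟨c, hc⟩ := by
    rintro a (rfl | rfl | rfl)
    · simpa using h1
    · simpa using h2
    · simpa using h3
  have h3card : ({⟨p, hp⟩, ⟨q, hq⟩, ⟨r, hr⟩} : Set C).ncard = 3 := by
    refine Set.ncard_eq_three.mpr ⟨_, _, _, ?_, ?_, ?_, rfl⟩
    · exact fun h => hpq (congrArg Subtype.val h)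
    · exact fun h => hpr (congrArg Subtype.val h)
    · exact fun h => hqr (congrArg Subtype.val h)
  have hle : (3 : ℕ) ≤ ((G.induce C).neighborSet ⟨c, hc⟩).ncard := by
    rw [← h3card]
    exact Set.ncard_le_ncard hsub (Set.toFinite _)
  rw [hcyc.2 ⟨c, hc⟩] at hle
  omega

lemma key_lemma [Fintype V] (hG : IsBlockCactus G) {u w : V} {T : Set V}
    (huw : u ≠ w) (hnadj : ¬ G.Adj u w)
    (hadj : ∀ t ∈ T, G.Adj u t ∧ G.Adj w t)
    {t₁ t₂ : V} (ht₁ : t₁ ∈ T) (ht₂ : t₂ ∈ T) (h12 : t₁ ≠ t₂)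
    {c p q r : V} (hc : c ∈ insert u (insert w T))
    (hp : p ∈ insert u (insert w T)) (hq : q ∈ insert u (insert w T))
    (hr : r ∈ insert u (insert w T))
    (hpq : p ≠ q) (hpr : p ≠ r) (hqr : q ≠ r)
    (h1 : G.Adj c p) (h2 : G.Adj c q) (h3 : G.Adj c r) : False := by
  obtain ⟨hconn, hncv⟩ := hub_lemma huw hadj ht₁ ht₂ h12
  obtain ⟨C, hBC, hblock⟩ := exists_block_superset hconn hncv
  rcases hG.2 C hblock with hcyc | hcomp
  · exact cycle_no_three hcyc (hBC hc) (hBC hp) (hBC hq) (hBC hr) hpq hpr hqr h1 h2 h3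
  · exact hnadj (hcomp u (hBC (Set.mem_insert _ _)) w
      (hBC (Set.mem_insert_of_mem _ (Set.mem_insert _ _))) huw)

end Aux

theorem stmt19 [Fintype V] (G : SimpleGraph V) (hG : IsBlockCactus G)
    (S : Set V) (hS : IsLDSet G S) (u : V) (hu : u ∉ S)
    (hdom : S ⊆ G.neighborSet u) (w : V) (hw : w ∉ insert u (G.neighborSet u)) :
    (1 ≤ (G.neighborSet u ∩ G.neighborSet w).ncard ∧
      (G.neighborSet u ∩ G.neighborSet w).ncard ≤ 2) ∧
    (∀ x : V, G.neighborSet u ∩ G.neighborSet w = {x} → x ∈ S) ∧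
    (∀ x y : V, x ≠ y → G.neighborSet u ∩ G.neighborSet w = {x, y} →
      ¬ G.Adj x y) := by
  have hwu : w ≠ u := fun h => hw (h ▸ Set.mem_insert _ _)
  have hnadj : ¬ G.Adj u w := fun h => hw (Set.mem_insert_of_mem _ h)
  have huw : u ≠ w := fun h => hwu h.symm
  have hwS : w ∉ S := fun h => hnadj (hdom h)
  obtain ⟨s, hs1, hs2⟩ := hS.1 w hwS
  have hsmem : s ∈ G.neighborSet u ∩ G.neighborSet w := ⟨hdom hs2, hs1⟩
  refine ⟨⟨?_, ?_⟩, ?_, ?_⟩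
  · exact (Set.ncard_pos (Set.toFinite _)).mpr ⟨s, hsmem⟩
  · by_contra hcard
    push_neg at hcard
    obtain ⟨t, hts, htc⟩ := Set.exists_subset_card_eq (show 3 ≤ _ from hcard)
    obtain ⟨x, y, z, hxy, hxz, hyz, rfl⟩ := Set.ncard_eq_three.mp htc
    have hx := hts (by simp : x ∈ ({x, y, z} : Set V))
    have hy := hts (by simp : y ∈ ({x, y, z} : Set V))
    have hz := hts (by simp : z ∈ ({x, y, z} : Set V))
    refine key_lemma (T := {x, y, z}) hG huw hnadj ?_
      (t₁ := x) (t₂ := y) (by simp) (by simp) hxy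
      (c := u) (p := x) (q := y) (r := z) (Set.mem_insert _ _)
      (by simp) (by simp) (by simp) hxy hxz hyz hx.1 hy.1 hz.1
    rintro a (rfl | rfl | rfl)
    · exact ⟨hx.1, hx.2⟩
    · exact ⟨hy.1, hy.2⟩
    · exact ⟨hz.1, hz.2⟩
  · intro x hxeq
    have hsx : s ∈ ({x} : Set V) := hxeq ▸ hsmem
    rw [Set.mem_singleton_iff] at hsx
    exact hsx ▸ hs2
  · intro x y hxy heq hadjxy
    have hx : x ∈ G.neighborSet u ∩ G.neighborSet w := by
      rw [heq]; simp
    have hy : y ∈ G.neighborSet u ∩ G.neighborSet w := by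
      rw [heq]; simp
    have huy : u ≠ y := fun h => (G.irrefl (h ▸ hy.1 : G.Adj u u))
    have hwy : w ≠ y := fun h => (G.irrefl (h ▸ hy.2 : G.Adj w w))
    refine key_lemma (T := {x, y}) hG huw hnadj ?_
      (t₁ := x) (t₂ := y) (by simp) (by simp) hxy
      (c := x) (p := u) (q := w) (r := y) (by simp)
      (Set.mem_insert _ _) (by simp) (by simp) huw huy hwy
      hx.1.symm hx.2.symm hadjxy
    rintro a (rfl | rfl)
    · exact ⟨hx.1, hx.2⟩
    · exact ⟨hy.1, hy.2⟩
end
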